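/- arXiv:2505.20227 — 2 statements merged into one kernel-verified Lean document; each statement's English description precedes it below -/
import Mathlib

section
/- The infimum of the expected cross-entropy risk over all predictors equals the conditional entropy: ⨅ over all f : 𝒳 → ℝ with 0 < f(x) < 1 for every x ∈ 𝒳 of R(f) = H(Y|X). -/
open Finset

/-- Joint probability `p_{X,Y}(x,y) = ∑_{ω : X ω = x ∧ Y ω = y} P ω`. -/
noncomputable def pJoint {Ω 𝒳 : Type*} [Fintype Ω] [DecidableEq 𝒳]
    (P : Ω → ℝ) (X : Ω → 𝒳) (Y : Ω → Bool) (x : 𝒳) (y : Bool) : ℝ :=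
  ∑ ω ∈ Finset.univ.filter (fun ω => X ω = x ∧ Y ω = y), P ω

/-- Marginal probability `p_X(x) = ∑_{ω : X ω = x} P ω`. -/
noncomputable def pMarg {Ω 𝒳 : Type*} [Fintype Ω] [DecidableEq 𝒳]
    (P : Ω → ℝ) (X : Ω → 𝒳) (x : 𝒳) : ℝ :=
  ∑ ω ∈ Finset.univ.filter (fun ω => X ω = x), P ω

/-- Conditional entropy `H(Y|X)`; terms with `p_{X,Y}(x,y) = 0` vanish since `0 · log _ = 0`. -/
noncomputable def condEnt {Ω 𝒳 : Type*} [Fintype Ω] [Fintype 𝒳] [DecidableEq 𝒳]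
    (P : Ω → ℝ) (X : Ω → 𝒳) (Y : Ω → Bool) : ℝ :=
  -∑ x : 𝒳, ∑ y : Bool, pJoint P X Y x y * Real.log (pJoint P X Y x y / pMarg P X x)

/-- Binary cross-entropy loss. -/
noncomputable def ceLoss (q : ℝ) (y : Bool) : ℝ :=
  if y then -Real.log q else -Real.log (1 - q)

/-- Expected cross-entropy risk of predictor `f`. -/
noncomputable def risk {Ω 𝒳 : Type*} [Fintype Ω]
    (P : Ω → ℝ) (X : Ω → 𝒳) (Y : Ω → Bool) (f : 𝒳 → ℝ) : ℝ :=
  ∑ ω, P ω * ceLoss (f (X ω)) (Y ω)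

lemma pMarg_eq' {Ω 𝒳 : Type*} [Fintype Ω] [DecidableEq 𝒳]
    (P : Ω → ℝ) (X : Ω → 𝒳) (Y : Ω → Bool) (x : 𝒳) :
    pMarg P X x = pJoint P X Y x true + pJoint P X Y x false := by
  unfold pMarg pJoint
  rw [← Finset.sum_filter_add_sum_filter_not (Finset.univ.filter (fun ω => X ω = x))
      (fun ω => Y ω = true), Finset.filter_filter, Finset.filter_filter]
  congr 1 <;> · congr 1; ext ω; simp

lemma risk_eq' {Ω 𝒳 : Type*} [Fintype Ω] [Fintype 𝒳] [DecidableEq 𝒳]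
    (P : Ω → ℝ) (X : Ω → 𝒳) (Y : Ω → Bool) (f : 𝒳 → ℝ) :
    risk P X Y f = ∑ x : 𝒳, (pJoint P X Y x true * ceLoss (f x) true
      + pJoint P X Y x false * ceLoss (f x) false) := by
  unfold risk pJoint
  have key : ∀ x : 𝒳, ∀ y : Bool,
      (∑ ω ∈ Finset.univ.filter (fun ω => X ω = x ∧ Y ω = y), P ω) * ceLoss (f x) y
      = ∑ ω ∈ Finset.univ.filter (fun ω => X ω = x ∧ Y ω = y),
          P ω * ceLoss (f (X ω)) (Y ω) := by
    intro x y
    rw [Finset.sum_mul]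
    refine Finset.sum_congr rfl fun ω hω => ?_
    simp only [Finset.mem_filter] at hω
    rw [hω.2.1, hω.2.2]
  simp_rw [key]
  rw [← Finset.sum_fiberwise Finset.univ X (fun ω => P ω * ceLoss (f (X ω)) (Y ω))]
  refine Finset.sum_congr rfl fun x _ => ?_
  rw [← Finset.sum_filter_add_sum_filter_not (Finset.univ.filter (fun ω => X ω = x))
      (fun ω => Y ω = true), Finset.filter_filter, Finset.filter_filter]
  congr 1 <;> · congr 1; ext ω; simp

lemma gibbs_pt (a b q : ℝ) (ha : 0 ≤ a) (hb : 0 ≤ b) (hq : 0 < q) (hq1 : q < 1) :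
    -(a * Real.log (a/(a+b)) + b * Real.log (b/(a+b)))
      ≤ a * (-Real.log q) + b * (-Real.log (1-q)) := by
  rcases eq_or_lt_of_le ha with ha0 | ha
  · rcases eq_or_lt_of_le hb with hb0 | hb
    · simp [← ha0, ← hb0]
    · rw [← ha0]
      simp only [zero_mul, zero_add, div_self (ne_of_gt hb), Real.log_one, mul_zero,
        neg_zero, add_zero]
      have : Real.log (1 - q) ≤ 0 := Real.log_nonpos (by linarith) (by linarith)
      nlinarith
  · rcases eq_or_lt_of_le hb with hb0 | hb
    · rw [← hb0]
      simp only [zero_mul, add_zero, div_self (ne_of_gt ha), Real.log_one, mul_zero, neg_zero]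
      have : Real.log q ≤ 0 := Real.log_nonpos (by linarith) (by linarith)
      nlinarith
    · have hm : 0 < a + b := by linarith
      have h1q : 0 < 1 - q := by linarith
      have h1 : Real.log ((a+b)*q/a) ≤ (a+b)*q/a - 1 :=
        Real.log_le_sub_one_of_pos (by positivity)
      have h2 : Real.log ((a+b)*(1-q)/b) ≤ (a+b)*(1-q)/b - 1 :=
        Real.log_le_sub_one_of_pos
          (mul_pos (mul_pos hm h1q) (inv_pos.mpr hb) |>.trans_eq (by ring))
      have e1 : Real.log ((a+b)*q/a) = Real.log q - Real.log (a/(a+b)) := by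
        rw [Real.log_div (by positivity) (ne_of_gt ha), Real.log_mul (ne_of_gt hm) (ne_of_gt hq),
            Real.log_div (ne_of_gt ha) (ne_of_gt hm)]
        ring
      have e2 : Real.log ((a+b)*(1-q)/b) = Real.log (1-q) - Real.log (b/(a+b)) := by
        rw [Real.log_div (by positivity) (ne_of_gt hb),
            Real.log_mul (ne_of_gt hm) (ne_of_gt h1q),
            Real.log_div (ne_of_gt hb) (ne_of_gt hm)]
        ring
      rw [e1] at h1; rw [e2] at h2
      have k1 : a * (Real.log q - Real.log (a/(a+b))) ≤ (a+b)*q - a := by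
        have := mul_le_mul_of_nonneg_left h1 (le_of_lt ha)
        calc a * (Real.log q - Real.log (a/(a+b))) ≤ a * ((a+b)*q/a - 1) := this
          _ = (a+b)*q - a := by field_simp
      have k2 : b * (Real.log (1-q) - Real.log (b/(a+b))) ≤ (a+b)*(1-q) - b := by
        have := mul_le_mul_of_nonneg_left h2 (le_of_lt hb)
        calc b * (Real.log (1-q) - Real.log (b/(a+b))) ≤ b * ((a+b)*(1-q)/b - 1) := this
          _ = (a+b)*(1-q) - b := by field_simp
      nlinarith


/-- the infimum of the expected cross-entropy risk over all
predictors `f` with `0 < f x < 1` equals the conditional entropy `H(Y|X)`. -/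
theorem iInf_risk_eq_condEnt {Ω 𝒳 : Type*} [Fintype Ω] [Nonempty Ω]
    [Fintype 𝒳] [DecidableEq 𝒳]
    (P : Ω → ℝ) (hP0 : ∀ ω, 0 ≤ P ω) (hP1 : ∑ ω, P ω = 1)
    (X : Ω → 𝒳) (Y : Ω → Bool) :
    ⨅ f : {f : 𝒳 → ℝ // ∀ x, 0 < f x ∧ f x < 1}, risk P X Y f.1
      = condEnt P X Y := by
  set a : 𝒳 → ℝ := fun x => pJoint P X Y x true with ha_def
  set b : 𝒳 → ℝ := fun x => pJoint P X Y x false with hb_def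
  have hja : ∀ x, 0 ≤ a x := fun x => Finset.sum_nonneg fun ω _ => hP0 ω
  have hjb : ∀ x, 0 ≤ b x := fun x => Finset.sum_nonneg fun ω _ => hP0 ω
  have hle1 : ∀ (x : 𝒳) (y : Bool), pJoint P X Y x y ≤ 1 := by
    intro x y
    rw [← hP1]
    exact Finset.sum_le_sum_of_subset_of_nonneg (Finset.filter_subset _ _)
      (fun i _ _ => hP0 i)
  -- entropy rewritten
  have hA : condEnt P X Y
      = ∑ x : 𝒳, -(a x * Real.log (a x / (a x + b x))
          + b x * Real.log (b x / (a x + b x))) := by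
    unfold condEnt
    rw [← Finset.sum_neg_distrib]
    refine Finset.sum_congr rfl fun x _ => ?_
    rw [Fintype.sum_bool, pMarg_eq' P X Y x]
  have hne : Nonempty {f : 𝒳 → ℝ // ∀ x, 0 < f x ∧ f x < 1} :=
    ⟨⟨fun _ => 1/2, fun _ => by norm_num⟩⟩
  -- lower bound
  have hlow : ∀ f : {f : 𝒳 → ℝ // ∀ x, 0 < f x ∧ f x < 1},
      condEnt P X Y ≤ risk P X Y f.1 := by
    rintro ⟨f, hf⟩
    rw [risk_eq', hA]
    refine Finset.sum_le_sum fun x _ => ?_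
    have := gibbs_pt (a x) (b x) (f x) (hja x) (hjb x) (hf x).1 (hf x).2
    simpa [ceLoss] using this
  have hbdd : BddBelow (Set.range fun f : {f : 𝒳 → ℝ // ∀ x, 0 < f x ∧ f x < 1}
      => risk P X Y f.1) := ⟨condEnt P X Y, by rintro _ ⟨f, rfl⟩; exact hlow f⟩
  refine le_antisymm (le_of_forall_pos_le_add fun δ hδ => ?_) (le_ciInf hlow)
  -- upper bound: near-optimal predictor
  set n : ℝ := (Fintype.card 𝒳 : ℝ) with hn
  have hn0 : 0 ≤ n := Nat.cast_nonneg _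
  set δ' : ℝ := δ / (n + 1) with hδ'def
  have hδ' : 0 < δ' := div_pos hδ (by linarith)
  set ε : ℝ := 1 - Real.exp (-δ') with hεdef
  have hε0 : 0 < ε := by
    have : Real.exp (-δ') < 1 := Real.exp_lt_one_iff.mpr (by linarith)
    simp only [hεdef]; linarith
  have hε1 : ε < 1 := by
    have : 0 < Real.exp (-δ') := Real.exp_pos _
    simp only [hεdef]; linarith
  have hlogε : -Real.log (1 - ε) = δ' := by
    rw [hεdef]; simp [Real.log_exp]
  set g : 𝒳 → ℝ := fun x =>
    if a x = 0 then ε else if b x = 0 then 1 - ε else a x / (a x + b x) with hg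
  have hgfeas : ∀ x, 0 < g x ∧ g x < 1 := by
    intro x
    simp only [hg]
    split_ifs with h1 h2
    · exact ⟨hε0, hε1⟩
    · constructor <;> linarith
    · have hax : 0 < a x := lt_of_le_of_ne (hja x) (Ne.symm h1)
      have hbx : 0 < b x := lt_of_le_of_ne (hjb x) (Ne.symm h2)
      have hm : 0 < a x + b x := by linarith
      exact ⟨div_pos hax hm, (div_lt_one hm).mpr (by linarith)⟩
  have hriskg : risk P X Y g ≤ condEnt P X Y + δ := by
    rw [risk_eq', hA]
    have step : ∀ x : 𝒳, a x * ceLoss (g x) true + b x * ceLoss (g x) false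
        ≤ -(a x * Real.log (a x / (a x + b x))
            + b x * Real.log (b x / (a x + b x))) + δ' := by
      intro x
      simp only [ceLoss, if_true, if_false, Bool.false_eq_true]
      simp only [hg]
      split_ifs with h1 h2
      · -- a x = 0
        rw [h1]
        have hb0 : b x * Real.log (b x / b x) = 0 := by
          rcases eq_or_lt_of_le (hjb x) with h | h
          · rw [← h]; ring
          · rw [div_self (ne_of_gt h), Real.log_one, mul_zero]
        rw [hlogε]
        simp only [zero_mul, zero_add, hb0, neg_zero, add_zero]
        have : b x ≤ 1 := hle1 x false
        nlinarith [hjb x, hδ'.le]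
      · -- b x = 0
        rw [h2]
        have hax : 0 < a x := lt_of_le_of_ne (hja x) (Ne.symm h1)
        have ha0 : a x * Real.log (a x / a x) = 0 := by
          rw [div_self (ne_of_gt hax), Real.log_one, mul_zero]
        rw [hlogε]
        simp only [zero_mul, add_zero, ha0, neg_zero, zero_add]
        have : a x ≤ 1 := hle1 x true
        nlinarith [hja x, hδ'.le]
      · -- both positive
        have hax : 0 < a x := lt_of_le_of_ne (hja x) (Ne.symm h1)
        have hbx : 0 < b x := lt_of_le_of_ne (hjb x) (Ne.symm h2)
        have hm : 0 < a x + b x := by linarith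
        have hcompl : 1 - a x / (a x + b x) = b x / (a x + b x) := by
          field_simp
          ring
        rw [hcompl]
        nlinarith [hδ'.le]
    calc ∑ x : 𝒳, (a x * ceLoss (g x) true + b x * ceLoss (g x) false)
        ≤ ∑ x : 𝒳, (-(a x * Real.log (a x / (a x + b x))
            + b x * Real.log (b x / (a x + b x))) + δ') :=
          Finset.sum_le_sum fun x _ => step x
      _ = (∑ x : 𝒳, -(a x * Real.log (a x / (a x + b x))
            + b x * Real.log (b x / (a x + b x)))) + n * δ' := by
          rw [Finset.sum_add_distrib, Finset.sum_const, Finset.card_univ, hn,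
            nsmul_eq_mul]
      _ ≤ (∑ x : 𝒳, -(a x * Real.log (a x / (a x + b x))
            + b x * Real.log (b x / (a x + b x)))) + δ := by
          have : n * δ' ≤ δ := by
            rw [hδ'def]
            rw [div_eq_mul_inv]
            have h1 : n * (δ * (n+1)⁻¹) = δ * (n * (n+1)⁻¹) := by ring
            rw [h1]
            have h2 : n * (n+1)⁻¹ ≤ 1 := by
              rw [← div_eq_mul_inv, div_le_one (by linarith)]; linarith
            nlinarith
          linarith
  exact le_trans (ciInf_le hbdd ⟨g, hgfeas⟩) hriskg
end

section
/- Domain-selection gap lower bound (entropy form). Let X_j : Ω → 𝒳_j for j ∈ Fin D be a family of random variables into finite types, Y : Ω → Bool, and W : Ω → ∏_{j ∈ Fin D} 𝒳_j the joint random variable defined by (W ω) j = X_j ω. Let S ⊆ Fin D be nonempty and suppose Z : Ω → 𝒵 (𝒵 finite) satisfies: for every j ∈ S there is a function g_j : 𝒳_j → 𝒵 with Z ω = g_j (X_j ω) for all ω ∈ Ω. Suppose i ∈ Fin D satisfies the optimality assumption I(X_i ; Y) = max_{j ∈ Fin D} I(X_j ; Y). Then H(Y | Z) − H(Y | W) ≥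 I(X_i ; Y) − min_{j ∈ S} I(X_j ; Y). -/
open Finset

/-- Log-sum inequality. -/
lemma log_sum_ineq {ι : Type*} (s : Finset ι) (a b : ι → ℝ)
    (ha : ∀ i ∈ s, 0 ≤ a i) (hb : ∀ i ∈ s, 0 ≤ b i)
    (hab : ∀ i ∈ s, b i = 0 → a i = 0) :
    (∑ i ∈ s, a i) * Real.log ((∑ i ∈ s, a i) / (∑ i ∈ s, b i)) ≤
      ∑ i ∈ s, a i * Real.log (a i / b i) := by
  set A := ∑ i ∈ s, a i with hA
  set B := ∑ i ∈ s, b i with hB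
  rcases eq_or_lt_of_le (Finset.sum_nonneg hb) with h0 | hBpos
  · -- B = 0 : all b vanish, hence all a vanish
    have hb0 : ∀ i ∈ s, b i = 0 := by
      intro i hi
      exact (Finset.sum_eq_zero_iff_of_nonneg hb).mp h0.symm i hi
    have ha0 : ∀ i ∈ s, a i = 0 := fun i hi => hab i hi (hb0 i hi)
    have : A = 0 := Finset.sum_eq_zero ha0
    rw [this, zero_mul]
    refine Finset.sum_nonneg fun i hi => ?_
    rw [ha0 i hi]; ring_nf; simp
  · -- B > 0 : Jensen with weights b i / B at points a i / b i
    have hJ := Real.convexOn_mul_log.map_sum_le (t := s)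
      (w := fun i => b i / B) (p := fun i => a i / b i)
      (fun i hi => div_nonneg (hb i hi) hBpos.le)
      (by rw [← Finset.sum_div, ← hB, div_self hBpos.ne'])
      (fun i hi => div_nonneg (ha i hi) (hb i hi))
    have key1 : ∑ i ∈ s, (b i / B) • (a i / b i) = A / B := by
      rw [hA, Finset.sum_div]
      refine Finset.sum_congr rfl fun i hi => ?_
      rcases eq_or_ne (b i) 0 with h | h
      · simp [h, hab i hi h]
      · simp only [smul_eq_mul]; rw [div_mul_div_comm, mul_comm (b i) (a i), mul_div_mul_right _ _ h]
    have key2 : ∀ i ∈ s, (b i / B) • (a i / b i * Real.log (a i / b i)) =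
        (a i * Real.log (a i / b i)) / B := by
      intro i hi
      rcases eq_or_ne (b i) 0 with h | h
      · simp [h, hab i hi h]
      · simp only [smul_eq_mul]; field_simp
    rw [key1, Finset.sum_congr rfl key2, ← Finset.sum_div] at hJ
    calc A * Real.log (A / B) = B * (A / B * Real.log (A / B)) := by have hB0 : B ≠ 0 := hBpos.ne'; field_simp
      _ ≤ B * ((∑ i ∈ s, a i * Real.log (a i / b i)) / B) := by
          exact mul_le_mul_of_nonneg_left hJ hBpos.le
      _ = ∑ i ∈ s, a i * Real.log (a i / b i) := by have hB0 : B ≠ 0 := hBpos.ne'; field_simp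





/-- Entropy `H(Y)` of a binary random variable; `0 · log 0 = 0` is automatic. -/
noncomputable def ent {Ω : Type*} [Fintype Ω] (P : Ω → ℝ) (Y : Ω → Bool) : ℝ :=
  -∑ y : Bool, pMarg P Y y * Real.log (pMarg P Y y)

/-- Mutual information `I(X;Y) = H(Y) − H(Y|X)`. -/
noncomputable def mutInfo {Ω 𝒳 : Type*} [Fintype Ω] [Fintype 𝒳] [DecidableEq 𝒳]
    (P : Ω → ℝ) (X : Ω → 𝒳) (Y : Ω → Bool) : ℝ :=
  ent P Y - condEnt P X Y

section CondEntAux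
open Finset
variable {Ω 𝒳 𝒵 : Type*} [Fintype Ω] [Fintype 𝒳] [DecidableEq 𝒳] [Fintype 𝒵] [DecidableEq 𝒵]

lemma pJoint_nonneg (P : Ω → ℝ) (hP0 : ∀ ω, 0 ≤ P ω) (X : Ω → 𝒳) (Y : Ω → Bool)
    (x : 𝒳) (y : Bool) : 0 ≤ pJoint P X Y x y :=
  Finset.sum_nonneg fun ω _ => hP0 ω

lemma pMarg_nonneg (P : Ω → ℝ) (hP0 : ∀ ω, 0 ≤ P ω) (X : Ω → 𝒳) (x : 𝒳) :
    0 ≤ pMarg P X x :=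
  Finset.sum_nonneg fun ω _ => hP0 ω

lemma pJoint_le_pMarg (P : Ω → ℝ) (hP0 : ∀ ω, 0 ≤ P ω) (X : Ω → 𝒳) (Y : Ω → Bool)
    (x : 𝒳) (y : Bool) : pJoint P X Y x y ≤ pMarg P X x := by
  refine Finset.sum_le_sum_of_subset_of_nonneg ?_ (fun ω _ _ => hP0 ω)
  intro ω hω
  simp only [Finset.mem_filter, Finset.mem_univ, true_and] at hω ⊢
  exact hω.1

lemma pJoint_fiber (P : Ω → ℝ) (X : Ω → 𝒳) (Y : Ω → Bool) (g : 𝒳 → 𝒵) (z : 𝒵) (y : Bool) :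
    pJoint P (fun ω => g (X ω)) Y z y =
      ∑ x ∈ Finset.univ.filter (fun x => g x = z), pJoint P X Y x y := by
  unfold pJoint
  rw [← Finset.sum_fiberwise_of_maps_to
    (s := Finset.univ.filter (fun ω => g (X ω) = z ∧ Y ω = y))
    (t := Finset.univ.filter (fun x => g x = z)) (g := X)
    (fun ω hω => by
      simp only [Finset.mem_filter, Finset.mem_univ, true_and] at hω ⊢
      exact hω.1) P]
  refine Finset.sum_congr rfl fun x hx => ?_
  simp only [Finset.mem_filter, Finset.mem_univ, true_and] at hx
  refine Finset.sum_congr ?_ fun _ _ => rfl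
  ext ω
  simp only [Finset.mem_filter, Finset.mem_univ, true_and]
  constructor
  · rintro ⟨⟨_, hy⟩, hxω⟩; exact ⟨hxω, hy⟩
  · rintro ⟨hxω, hy⟩; exact ⟨⟨by rw [hxω, hx], hy⟩, hxω⟩

lemma pMarg_fiber (P : Ω → ℝ) (X : Ω → 𝒳) (g : 𝒳 → 𝒵) (z : 𝒵) :
    pMarg P (fun ω => g (X ω)) z =
      ∑ x ∈ Finset.univ.filter (fun x => g x = z), pMarg P X x := by
  unfold pMarg
  rw [← Finset.sum_fiberwise_of_maps_to
    (s := Finset.univ.filter (fun ω => g (X ω) = z))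
    (t := Finset.univ.filter (fun x => g x = z)) (g := X)
    (fun ω hω => by
      simp only [Finset.mem_filter, Finset.mem_univ, true_and] at hω ⊢
      exact hω) P]
  refine Finset.sum_congr rfl fun x hx => ?_
  simp only [Finset.mem_filter, Finset.mem_univ, true_and] at hx
  refine Finset.sum_congr ?_ fun _ _ => rfl
  ext ω
  simp only [Finset.mem_filter, Finset.mem_univ, true_and]
  constructor
  · rintro ⟨_, hxω⟩; exact hxω
  · rintro hxω; exact ⟨by rw [hxω, hx], hxω⟩

/-- Coarsening the conditioning variable cannot decrease conditional entropy. -/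
lemma condEnt_comp_le (P : Ω → ℝ) (hP0 : ∀ ω, 0 ≤ P ω) (X : Ω → 𝒳) (Y : Ω → Bool)
    (g : 𝒳 → 𝒵) : condEnt P X Y ≤ condEnt P (fun ω => g (X ω)) Y := by
  unfold condEnt
  rw [neg_le_neg_iff]
  rw [← Finset.sum_fiberwise (Finset.univ : Finset 𝒳) g
    (fun x => ∑ y : Bool, pJoint P X Y x y * Real.log (pJoint P X Y x y / pMarg P X x))]
  refine Finset.sum_le_sum fun z _ => ?_
  rw [Finset.sum_comm]
  refine Finset.sum_le_sum fun y _ => ?_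
  rw [pJoint_fiber P X Y g z y, pMarg_fiber P X g z]
  exact log_sum_ineq _ _ _
    (fun x _ => pJoint_nonneg P hP0 X Y x y)
    (fun x _ => pMarg_nonneg P hP0 X x)
    (fun x _ h => le_antisymm (h ▸ pJoint_le_pMarg P hP0 X Y x y)
      (pJoint_nonneg P hP0 X Y x y))

end CondEntAux

/-- domain-selection gap lower bound (entropy form).
With `W` the joint of the family, `Z` a deterministic function of `X j` for
each `j ∈ S`, and `i` the domain maximizing `I(X j ; Y)` (optimality
assumption), we get `H(Y|Z) − H(Y|W) ≥ I(X i ; Y) − min_{j ∈ S} I(X j ; Y)`. -/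
theorem domain_selection_gap_entropy {Ω 𝒵 : Type*} {D : ℕ} {𝒳 : Fin D → Type*}
    [Fintype Ω] [Nonempty Ω] [∀ j, Fintype (𝒳 j)] [∀ j, DecidableEq (𝒳 j)]
    [Fintype 𝒵] [DecidableEq 𝒵]
    (P : Ω → ℝ) (hP0 : ∀ ω, 0 ≤ P ω) (hP1 : ∑ ω, P ω = 1)
    (X : ∀ j : Fin D, Ω → 𝒳 j) (Y : Ω → Bool)
    (W : Ω → ∀ j : Fin D, 𝒳 j) (hW : ∀ ω j, W ω j = X j ω)
    (S : Finset (Fin D)) (hS : S.Nonempty)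
    (Z : Ω → 𝒵) (hZ : ∀ j ∈ S, ∃ g : 𝒳 j → 𝒵, ∀ ω, Z ω = g (X j ω))
    (i : Fin D)
    (hopt : mutInfo P (X i) Y =
      Finset.univ.sup' ⟨i, Finset.mem_univ i⟩ (fun j => mutInfo P (X j) Y)) :
    condEnt P Z Y - condEnt P W Y ≥
      mutInfo P (X i) Y - S.inf' hS (fun j => mutInfo P (X j) Y) := by
  
  obtain ⟨j, hjS, hj⟩ := Finset.exists_mem_eq_inf' hS (fun j => mutInfo P (X j) Y)
  obtain ⟨g, hg⟩ := hZ j hjS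
  have h1 : condEnt P (X j) Y ≤ condEnt P Z Y := by
    have hZeq : Z = fun ω => g (X j ω) := funext hg
    rw [hZeq]
    exact condEnt_comp_le P hP0 (X j) Y g
  have h2 : condEnt P W Y ≤ condEnt P (X i) Y := by
    have hXi : (fun ω => (W ω) i) = X i := funext fun ω => hW ω i
    have := condEnt_comp_le P hP0 W Y (fun w => w i)
    rwa [show (fun ω => (fun w : ∀ j, 𝒳 j => w i) (W ω)) = X i from hXi] at this
  rw [hj]
  unfold mutInfo
  linarith
end
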